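/- Fix real numbers v with 0 < v < 1/2 and α ≥ 0. The function π̂_α(p) = p(1 + α − √(α² + 1 − 2v + 2p)) is strictly concave on [0, ∞); in particular its second derivative equals (−2(α²+1) − 3p + 4v)/(α² + 2p − 2v + 1)^{3/2}, which is negative for every p ≥ 0. -/

import Mathlib

/-- With 0 < v < 1/2 and α ≥ 0, the function
π̂(p) = p(1 + α − √(α² + 1 − 2v + 2p)) is strictly concave on [0,∞); its second
derivative equals (−2(α²+1) − 3p + 4v)/(α² + 2p − 2v + 1)^{3/2}, which is
negative for every p ≥ 0. -/
theorem stmt_3 (v α : ℝ) (hv : 0 < v ∧ v < 1 / 2) (hα : 0 ≤ α)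
    (f : ℝ → ℝ)
    (hf : ∀ p, f p = p * (1 + α - Real.sqrt (α ^ 2 + 1 - 2 * v + 2 * p))) :
    StrictConcaveOn ℝ (Set.Ici (0:ℝ)) f ∧
      ∀ p : ℝ, 0 ≤ p →
        deriv (deriv f) p =
          (-2 * (α ^ 2 + 1) - 3 * p + 4 * v) /
            (α ^ 2 + 2 * p - 2 * v + 1) ^ ((3:ℝ) / 2) ∧
        deriv (deriv f) p < 0 := by
  obtain ⟨hv0, hv2⟩ := hv
  set c : ℝ := α ^ 2 + 1 - 2 * v with hc_def
  have hc : 0 < c := by nlinarith [sq_nonneg α]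
  have hfF : ∀ p : ℝ, f p = p * (1 + α - Real.sqrt (c + 2 * p)) := by
    intro p
    rw [hf p]
  set g : ℝ → ℝ := fun p => 1 + α - Real.sqrt (c + 2 * p) - p / Real.sqrt (c + 2 * p)
    with hg_def
  have hsq : ∀ p : ℝ, 0 < c + 2 * p →
      HasDerivAt (fun q => Real.sqrt (c + 2 * q)) (1 / Real.sqrt (c + 2 * p)) p := by
    intro p hp
    have h1 : HasDerivAt (fun q : ℝ => c + 2 * q) 2 p := by
      simpa using ((hasDerivAt_id p).const_mul (2:ℝ)).const_add c
    have h2 := (Real.hasDerivAt_sqrt (ne_of_gt hp)).comp p h1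
    have hs0 : Real.sqrt (c + 2 * p) ≠ 0 := by positivity
    refine h2.congr_deriv ?_
    field_simp
  have hfd : ∀ p : ℝ, 0 < c + 2 * p → HasDerivAt f (g p) p := by
    intro p hp
    have hs := hsq p hp
    have hs0 : (0:ℝ) < Real.sqrt (c + 2 * p) := Real.sqrt_pos.2 hp
    have hu : HasDerivAt (fun q => 1 + α - Real.sqrt (c + 2 * q))
        (0 - 1 / Real.sqrt (c + 2 * p)) p := (hasDerivAt_const p (1 + α)).sub hs
    have h3 := (hasDerivAt_id p).mul hu
    have : f = fun q => q * (1 + α - Real.sqrt (c + 2 * q)) := funext hfF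
    rw [this]
    refine h3.congr_deriv ?_
    simp only [hg_def, id]
    field_simp
    ring
  have hgd : ∀ p : ℝ, 0 < c + 2 * p →
      HasDerivAt g ((-2 * (α ^ 2 + 1) - 3 * p + 4 * v) /
        (α ^ 2 + 2 * p - 2 * v + 1) ^ ((3:ℝ) / 2)) p := by
    intro p hp
    have hs := hsq p hp
    have hs0 : (0:ℝ) < Real.sqrt (c + 2 * p) := Real.sqrt_pos.2 hp
    set s := Real.sqrt (c + 2 * p) with hs_def
    have hs2 : s ^ 2 = c + 2 * p := Real.sq_sqrt (le_of_lt hp)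
    have h1 : HasDerivAt (fun q => 1 + α - Real.sqrt (c + 2 * q)) (0 - 1 / s) p :=
      (hasDerivAt_const p (1 + α)).sub hs
    have h2 : HasDerivAt (fun q => q / Real.sqrt (c + 2 * q))
        ((1 * s - p * (1 / s)) / s ^ 2) p := (hasDerivAt_id p).div hs (ne_of_gt hs0)
    have h3 := h1.sub h2
    refine h3.congr_deriv ?_
    have hpow : (c + 2 * p) ^ ((3:ℝ) / 2) = s ^ 3 := by
      rw [hs_def, Real.sqrt_eq_rpow, ← Real.rpow_natCast ((c + 2 * p) ^ ((1:ℝ)/2)) 3,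
        ← Real.rpow_mul (le_of_lt hp)]
      norm_num
    have harg : α ^ 2 + 2 * p - 2 * v + 1 = c + 2 * p := by rw [hc_def]; ring
    rw [harg, hpow]
    have hnum : -2 * (α ^ 2 + 1) - 3 * p + 4 * v = -2 * s ^ 2 + p := by
      rw [hs2, hc_def]; ring
    rw [hnum]
    field_simp
    ring
  have hmemd : ∀ p : ℝ, 0 ≤ p → (0:ℝ) < c + 2 * p := fun p hp => by linarith
  have hderiv2 : ∀ p : ℝ, 0 ≤ p → deriv (deriv f) p =
      (-2 * (α ^ 2 + 1) - 3 * p + 4 * v) /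
        (α ^ 2 + 2 * p - 2 * v + 1) ^ ((3:ℝ) / 2) := by
    intro p hp
    have hopen : IsOpen {q : ℝ | 0 < c + 2 * q} :=
      isOpen_lt continuous_const (by continuity)
    have hev : deriv f =ᶠ[nhds p] g := by
      filter_upwards [hopen.mem_nhds (hmemd p hp)] with q hq using (hfd q hq).deriv
    rw [hev.deriv_eq]
    exact (hgd p (hmemd p hp)).deriv
  have hneg : ∀ p : ℝ, 0 ≤ p →
      (-2 * (α ^ 2 + 1) - 3 * p + 4 * v) /
        (α ^ 2 + 2 * p - 2 * v + 1) ^ ((3:ℝ) / 2) < 0 := by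
    intro p hp
    apply div_neg_of_neg_of_pos
    · nlinarith [sq_nonneg α]
    · apply Real.rpow_pos_of_pos
      have := hmemd p hp
      rw [hc_def] at this
      linarith
  refine ⟨?_, fun p hp => ⟨hderiv2 p hp, (hderiv2 p hp) ▸ hneg p hp⟩⟩
  apply strictConcaveOn_of_deriv2_neg (convex_Ici 0)
  · intro p hp
    exact ((hfd p (hmemd p hp)).continuousAt).continuousWithinAt
  · intro p hp
    rw [interior_Ici] at hp
    have hp' : (0:ℝ) ≤ p := le_of_lt hp
    show deriv (deriv f) p < 0
    rw [hderiv2 p hp']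
    exact hneg p hp'
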